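/- Let C ⊆ B(H) be a C*-algebra acting nondegenerately on H. If the commutant C' is infinite dimensional, then there exists a linear manifold M ⊆ H invariant under C which is not closed. -/

import Mathlib

open scoped InnerProductSpace ComplexConjugate
set_option linter.unusedSectionVars false

namespace Stmt5Aux

variable {H : Type*} [NormedAddCommGroup H] [InnerProductSpace ℂ H] [CompleteSpace H]
variable (S : StarSubalgebra ℂ (H →L[ℂ] H))

/-- invariance of a submodule under `S` -/
def Inv (M : Submodule ℂ H) : Prop := ∀ T ∈ S, ∀ x ∈ M, T x ∈ M

local notation "𝔄" => Subalgebra.centralizer ℂ ((S : Set (H →L[ℂ] H)))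

variable {S}

lemma comm_of_mem {T C : H →L[ℂ] H} (hT : T ∈ 𝔄) (hC : C ∈ S) : C * T = T * C := hT C hC

lemma star_mem_cent {T : H →L[ℂ] H} (hT : T ∈ 𝔄) : star T ∈ 𝔄 := by
  intro C hC
  have h := hT (star C) (star_mem hC)
  calc C * star T = star (T * star C) := by rw [star_mul, star_star]
    _ = star (star C * T) := by rw [h]
    _ = star T * C := by rw [star_mul, star_star]

lemma inv_range {T : H →L[ℂ] H} (hT : T ∈ 𝔄) : Inv S T.range := by
  rintro C hC x ⟨y, rfl⟩
  refine ⟨C y, ?_⟩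
  have := congrArg (fun f : H →L[ℂ] H => f y) (comm_of_mem hT hC)
  simpa using this.symm

lemma inv_ker {T : H →L[ℂ] H} (hT : T ∈ 𝔄) : Inv S T.ker := by
  intro C hC x hx
  simp only [LinearMap.mem_ker, ContinuousLinearMap.coe_coe] at hx ⊢
  have := congrArg (fun f : H →L[ℂ] H => f x) (comm_of_mem hT hC)
  simp only [ContinuousLinearMap.mul_apply] at this
  rw [← this, hx, map_zero]

lemma inv_inf {M N : Submodule ℂ H} (hM : Inv S M) (hN : Inv S N) : Inv S (M ⊓ N) :=
  fun C hC x hx => ⟨hM C hC x hx.1, hN C hC x hx.2⟩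

lemma inv_sup {M N : Submodule ℂ H} (hM : Inv S M) (hN : Inv S N) : Inv S (M ⊔ N) := by
  intro C hC x hx
  rcases Submodule.mem_sup.1 hx with ⟨y, hy, z, hz, rfl⟩
  exact Submodule.mem_sup.2 ⟨C y, hM C hC y hy, C z, hN C hC z hz, by simp⟩

lemma inv_bot : Inv S (⊥ : Submodule ℂ H) := by
  intro C hC x hx
  simp only [Submodule.mem_bot] at hx ⊢
  simp [hx]

lemma inv_orthogonal {M : Submodule ℂ H} (hM : Inv S M) : Inv S Mᗮ := by
  intro C hC x hx
  intro v hv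
  have h1 : (ContinuousLinearMap.adjoint C) v ∈ M := by
    have : star C ∈ S := star_mem hC
    rw [← ContinuousLinearMap.star_eq_adjoint]
    exact hM _ this v hv
  have h2 : ⟪(ContinuousLinearMap.adjoint C) v, x⟫_ℂ = ⟪v, C x⟫_ℂ :=
    ContinuousLinearMap.adjoint_inner_left C x v
  rw [← h2]
  exact hx _ h1



/-- the orthogonal projection onto `U`, as a map `H →L[ℂ] H` -/
noncomputable def pj (U : Submodule ℂ H) [U.HasOrthogonalProjection] : H →L[ℂ] H :=
  U.subtypeL ∘L U.orthogonalProjectionOnto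

lemma pj_mem_range (U : Submodule ℂ H) [U.HasOrthogonalProjection] (x : H) : pj U x ∈ U :=
  (U.orthogonalProjectionOnto x).2

lemma pj_apply_of_mem (U : Submodule ℂ H) [U.HasOrthogonalProjection] {x : H} (hx : x ∈ U) :
    pj U x = x := by
  simp only [pj, ContinuousLinearMap.comp_apply, Submodule.subtypeL_apply]
  exact Submodule.starProjection_eq_self_iff.2 hx

lemma pj_apply_of_mem_orth (U : Submodule ℂ H) [U.HasOrthogonalProjection] {x : H} (hx : x ∈ Uᗮ) :
    pj U x = 0 := by
  simp only [pj, ContinuousLinearMap.comp_apply, Submodule.subtypeL_apply]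
  rw [Submodule.orthogonalProjectionOnto_apply_of_mem_orthogonal hx]
  rfl

lemma pj_idem (U : Submodule ℂ H) [U.HasOrthogonalProjection] : pj U * pj U = pj U := by
  ext x
  exact pj_apply_of_mem U (pj_mem_range U x)

lemma pj_star (U : Submodule ℂ H) [CompleteSpace U] : star (pj U) = pj U := by
  rw [ContinuousLinearMap.star_eq_adjoint]
  exact (isSelfAdjoint_starProjection U)

lemma pj_ne_zero {U : Submodule ℂ H} [U.HasOrthogonalProjection] (hU : U ≠ ⊥) : pj U ≠ 0 := by
  rcases Submodule.exists_mem_ne_zero_of_ne_bot hU with ⟨x, hx, hx0⟩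
  intro h
  exact hx0 (by rw [← pj_apply_of_mem U hx, h]; rfl)

/-- the projection onto a closed invariant subspace lies in the commutant -/
lemma pj_mem_cent {U : Submodule ℂ H} [U.HasOrthogonalProjection] (hUinv : Inv S U) :
    pj U ∈ 𝔄 := by
  intro C hC
  ext x
  simp only [ContinuousLinearMap.mul_apply]
  -- decompose x
  have hdx : x - pj U x ∈ Uᗮ := by
    intro v hv
    simpa [pj] using (Submodule.sub_starProjection_mem_orthogonal (K := U) x) v hv
  have h1 : C (pj U x) ∈ U := hUinv C hC _ (pj_mem_range U x)
  have h2 : C (x - pj U x) ∈ Uᗮ := inv_orthogonal hUinv C hC _ hdx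
  calc C (pj U x) = pj U (C (pj U x)) + pj U (C (x - pj U x)) := by
        rw [pj_apply_of_mem U h1, pj_apply_of_mem_orth U h2, add_zero]
    _ = pj U (C x) := by rw [← map_add, ← map_add, add_sub_cancel]

lemma inv_iSup_chain (f : ℕ →o Submodule ℂ H) (hf : ∀ n, Inv S (f n)) :
    Inv S (⨆ n, f n) := by
  intro C hC x hx
  obtain ⟨n, hn⟩ := (Submodule.mem_iSup_of_chain f x).1 hx
  exact (Submodule.mem_iSup_of_chain f (C x)).2 ⟨n, hf n C hC x hn⟩

/-- Baire-category stabilization: in a world where all invariant submodules are closed,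
every increasing chain of invariant submodules stabilizes. -/
lemma chain_stab (hW : ∀ M : Submodule ℂ H, Inv S M → IsClosed (M : Set H))
    (f : ℕ →o Submodule ℂ H) (hf : ∀ n, Inv S (f n)) : ∃ n, ∀ m, f m ≤ f n := by
  have hcl : ∀ n, IsClosed ((f n : Submodule ℂ H) : Set H) := fun n => hW _ (hf n)
  have hMcl : IsClosed ((⨆ n, f n : Submodule ℂ H) : Set H) := hW _ (inv_iSup_chain f hf)
  haveI : CompleteSpace (⨆ n, f n : Submodule ℂ H) := hMcl.completeSpace_coe
  have hcover : (⋃ n, {y : (⨆ n, f n : Submodule ℂ H) | (y : H) ∈ f n}) = Set.univ := by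
    ext y
    simp only [Set.mem_iUnion, Set.mem_setOf_eq, Set.mem_univ, iff_true]
    exact (Submodule.mem_iSup_of_chain f (y : H)).1 y.2
  haveI : BaireSpace (⨆ n, f n : Submodule ℂ H) := BaireSpace.of_completelyPseudoMetrizable
  have hclosed : ∀ n, IsClosed {y : (⨆ n, f n : Submodule ℂ H) | (y : H) ∈ f n} := fun n =>
    (hcl n).preimage continuous_subtype_val
  obtain ⟨n, hn⟩ := nonempty_interior_of_iUnion_of_closed hclosed hcover
  have htop : (f n).comap (⨆ n, f n : Submodule ℂ H).subtype = ⊤ :=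
    Submodule.eq_top_of_nonempty_interior' _ hn
  refine ⟨n, fun m => ?_⟩
  intro x hx
  have hxM : x ∈ (⨆ n, f n : Submodule ℂ H) := le_iSup f m hx
  have := htop ▸ Submodule.mem_top (R := ℂ) (x := (⟨x, hxM⟩ : (⨆ n, f n : Submodule ℂ H)))
  simpa using (Submodule.mem_comap.1 this)

variable (S) in
/-- a minimal nonzero closed invariant subspace -/
def Atom (U : Submodule ℂ H) : Prop :=
  IsClosed (U : Set H) ∧ Inv S U ∧ U ≠ ⊥ ∧
    ∀ V : Submodule ℂ H, V ≤ U → IsClosed (V : Set H) → Inv S V → V = ⊥ ∨ V = U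

lemma atom_exists (hW : ∀ M : Submodule ℂ H, Inv S M → IsClosed (M : Set H))
    {V : Submodule ℂ H} (hVc : IsClosed (V : Set H)) (hVi : Inv S V) (hV : V ≠ ⊥) :
    ∃ U, Atom S U ∧ U ≤ V := by
  by_contra hno
  push_neg at hno
  -- every nonzero closed invariant subspace of V has a strictly smaller nonzero one
  have hstep : ∀ W : Submodule ℂ H, W ≤ V → IsClosed (W : Set H) → Inv S W → W ≠ ⊥ →
      ∃ W' : Submodule ℂ H, W' ≤ W ∧ IsClosed (W' : Set H) ∧ Inv S W' ∧ W' ≠ ⊥ ∧ W' ≠ W := by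
    intro W hWV hWc hWi hWb
    by_contra hnope
    push_neg at hnope
    refine hno W ⟨hWc, hWi, hWb, ?_⟩ hWV
    intro V' hV'W hV'c hV'i
    by_contra hcon
    push_neg at hcon
    exact hcon.2 (hnope V' hV'W hV'c hV'i hcon.1)
  classical
  -- build a strictly decreasing chain by dependent choice
  let P := {W : Submodule ℂ H // W ≤ V ∧ IsClosed (W : Set H) ∧ Inv S W ∧ W ≠ ⊥}
  have hPstep : ∀ p : P, ∃ q : P, q.1 ≤ p.1 ∧ q.1 ≠ p.1 := by
    rintro ⟨W, hWV, hWc, hWi, hWb⟩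
    obtain ⟨W', h1, h2, h3, h4, h5⟩ := hstep W hWV hWc hWi hWb
    exact ⟨⟨W', h1.trans hWV, h2, h3, h4⟩, h1, h5⟩
  choose step hstep1 hstep2 using hPstep
  let g : ℕ → P := fun n => step^[n] ⟨V, le_refl V, hVc, hVi, hV⟩
  have hgsucc : ∀ n, g (n + 1) = step (g n) := fun n =>
    Function.iterate_succ_apply' step n _
  have hmono : ∀ n, (g (n+1)).1 ≤ (g n).1 := fun n => hgsucc n ▸ hstep1 (g n)
  have hne : ∀ n, (g (n+1)).1 ≠ (g n).1 := fun n => hgsucc n ▸ hstep2 (g n)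
  -- pass to orthogonal complements, an increasing chain
  have hmono' : Monotone (fun n => ((g n).1)ᗮ) := by
    apply monotone_nat_of_le_succ
    intro n
    exact Submodule.orthogonal_le (hmono n)
  obtain ⟨n, hn⟩ := chain_stab hW ⟨fun n => ((g n).1)ᗮ, hmono'⟩
      (fun n => inv_orthogonal (g n).2.2.2.1)
  have h1 : ((g (n+1)).1)ᗮ = ((g n).1)ᗮ :=
    le_antisymm (hn (n+1)) (hmono' (Nat.le_succ n))
  apply hne n
  haveI : CompleteSpace ((g (n+1)).1 : Submodule ℂ H) := (g (n+1)).2.2.1.completeSpace_coe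
  haveI : CompleteSpace ((g n).1 : Submodule ℂ H) := (g n).2.2.1.completeSpace_coe
  calc (g (n+1)).1 = ((g (n+1)).1)ᗮᗮ := (Submodule.orthogonal_orthogonal _).symm
    _ = ((g n).1)ᗮᗮ := by rw [h1]
    _ = (g n).1 := Submodule.orthogonal_orthogonal _

open Classical in
/-- total version of the orthogonal projection -/
noncomputable def pj' (U : Submodule ℂ H) : H →L[ℂ] H :=
  if h : IsClosed (U : Set H) then (letI := h.completeSpace_coe; pj U) else 0

lemma pj'_eq {U : Submodule ℂ H} (h : IsClosed (U : Set H)) :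
    pj' U = (letI := h.completeSpace_coe; pj U) := dif_pos h

lemma pj'_bot : pj' (⊥ : Submodule ℂ H) = 0 := by
  rw [pj'_eq (by rw [Submodule.bot_coe]; exact isClosed_singleton)]
  ext x
  simpa using pj_apply_of_mem_orth (⊥ : Submodule ℂ H) (by simp : x ∈ (⊥ : Submodule ℂ H)ᗮ)

lemma pj'_mem_range {U : Submodule ℂ H} (h : IsClosed (U : Set H)) (x : H) : pj' U x ∈ U := by
  rw [pj'_eq h]; letI := h.completeSpace_coe; exact pj_mem_range U x

lemma pj'_apply_of_mem {U : Submodule ℂ H} (h : IsClosed (U : Set H)) {x : H} (hx : x ∈ U) :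
    pj' U x = x := by
  rw [pj'_eq h]; letI := h.completeSpace_coe; exact pj_apply_of_mem U hx

lemma pj'_apply_of_mem_orth {U : Submodule ℂ H} (h : IsClosed (U : Set H)) {x : H}
    (hx : x ∈ Uᗮ) : pj' U x = 0 := by
  rw [pj'_eq h]; letI := h.completeSpace_coe; exact pj_apply_of_mem_orth U hx

lemma pj'_idem {U : Submodule ℂ H} (h : IsClosed (U : Set H)) : pj' U * pj' U = pj' U := by
  rw [pj'_eq h]; letI := h.completeSpace_coe; exact pj_idem U

lemma pj'_star {U : Submodule ℂ H} (h : IsClosed (U : Set H)) : star (pj' U) = pj' U := by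
  rw [pj'_eq h]; letI := h.completeSpace_coe; exact pj_star U

lemma pj'_ne_zero {U : Submodule ℂ H} (h : IsClosed (U : Set H)) (hU : U ≠ ⊥) : pj' U ≠ 0 := by
  rw [pj'_eq h]; letI := h.completeSpace_coe; exact pj_ne_zero hU

lemma pj'_mem_cent {U : Submodule ℂ H} (h : IsClosed (U : Set H)) (hUinv : Inv S U) :
    pj' U ∈ 𝔄 := by
  rw [pj'_eq h]; letI := h.completeSpace_coe; exact pj_mem_cent hUinv

lemma orth_symm {U V : Submodule ℂ H} (h : U ≤ Vᗮ) : V ≤ Uᗮ := by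
  intro v hv u hu
  rw [← inner_eq_zero_symm]
  exact h hu v hv

/-- decomposition of `H` into finitely many mutually orthogonal minimal invariant subspaces,
assuming all invariant submodules are closed -/
lemma decomp (hW : ∀ M : Submodule ℂ H, Inv S M → IsClosed (M : Set H)) :
    ∃ (n : ℕ) (U : ℕ → Submodule ℂ H),
      (∀ i, Atom S (U i) ∨ U i = ⊥) ∧
      (∀ i j, i ≠ j → U i ≤ (U j)ᗮ) ∧
      (∑ i ∈ Finset.range n, pj' (U i)) = 1 := by
  classical
  set nxt : Submodule ℂ H → Submodule ℂ H :=
    fun W => if h : ∃ U, Atom S U ∧ U ≤ Wᗮ then h.choose else ⊥ with hnxt_def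
  have hnxt_le : ∀ W, nxt W ≤ Wᗮ := by
    intro W
    by_cases h : ∃ U, Atom S U ∧ U ≤ Wᗮ
    · simpa [hnxt_def, dif_pos h] using h.choose_spec.2
    · simp [hnxt_def, dif_neg h]
  have hnxt_atom : ∀ W, Atom S (nxt W) ∨ nxt W = ⊥ := by
    intro W
    by_cases h : ∃ U, Atom S U ∧ U ≤ Wᗮ
    · left; simpa [hnxt_def, dif_pos h] using h.choose_spec.1
    · right; simp [hnxt_def, dif_neg h]
  have hnxt_inv : ∀ W, Inv S (nxt W) := by
    intro W
    rcases hnxt_atom W with h | h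
    · exact h.2.1
    · rw [h]; exact inv_bot
  have hnxt_ne : ∀ W : Submodule ℂ H, Wᗮ ≠ ⊥ → Inv S W → nxt W ≠ ⊥ := by
    intro W hWo hWi
    have hWoc : IsClosed ((Wᗮ : Submodule ℂ H) : Set H) := hW _ (inv_orthogonal hWi)
    obtain ⟨U, hU⟩ := atom_exists hW hWoc (inv_orthogonal hWi) hWo
    have h : ∃ U, Atom S U ∧ U ≤ Wᗮ := ⟨U, hU⟩
    intro hbot
    rw [hnxt_def] at hbot
    simp only [dif_pos h] at hbot
    exact h.choose_spec.1.2.2.1 hbot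
  -- the increasing chain of partial sums
  set g : ℕ → Submodule ℂ H := fun n => Nat.rec ⊥ (fun _ W => W ⊔ nxt W) n with hg_def
  have hg_succ : ∀ n, g (n+1) = g n ⊔ nxt (g n) := fun n => rfl
  have hg_inv : ∀ n, Inv S (g n) := by
    intro n
    induction n with
    | zero => exact inv_bot
    | succ n ih => rw [hg_succ]; exact inv_sup ih (hnxt_inv (g n))
  have hg_mono : Monotone g := monotone_nat_of_le_succ (fun n => (hg_succ n) ▸ le_sup_left)
  obtain ⟨n, hn⟩ := chain_stab hW ⟨g, hg_mono⟩ hg_inv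
  have hstall : nxt (g n) = ⊥ := by
    have h0 : nxt (g n) ≤ g (n+1) := by rw [hg_succ n]; exact le_sup_right
    have h1 : nxt (g n) ≤ g n := h0.trans (hn (n+1))
    have h2 : nxt (g n) ≤ g n ⊓ (g n)ᗮ := le_inf h1 (hnxt_le (g n))
    rw [Submodule.inf_orthogonal_eq_bot] at h2
    exact le_bot_iff.1 h2
  have htop : g n = ⊤ := by
    by_contra hne
    haveI : CompleteSpace (g n) := (hW _ (hg_inv n)).completeSpace_coe
    have : (g n)ᗮ ≠ ⊥ := fun h => hne (Submodule.orthogonal_eq_bot_iff.1 h)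
    exact hnxt_ne (g n) this (hg_inv n) hstall
  refine ⟨n, fun i => nxt (g i), fun i => hnxt_atom (g i), ?_, ?_⟩
  · -- pairwise orthogonality
    have key : ∀ i j, i < j → nxt (g j) ≤ (nxt (g i))ᗮ := by
      intro i j hij
      calc nxt (g j) ≤ (g j)ᗮ := hnxt_le (g j)
        _ ≤ (g (i+1))ᗮ := Submodule.orthogonal_le (hg_mono hij)
        _ ≤ (nxt (g i))ᗮ := Submodule.orthogonal_le ((hg_succ i) ▸ le_sup_right)
    intro i j hij
    rcases lt_or_gt_of_ne hij with h | h
    · exact orth_symm (key i j h)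
    · exact key j i h
  · -- the projections sum to the identity
    have hUc : ∀ i, IsClosed ((nxt (g i) : Submodule ℂ H) : Set H) := fun i => hW _ (hnxt_inv _)
    have main : ∀ k x, x ∈ g k → (∑ i ∈ Finset.range k, pj' (nxt (g i))) x = x := by
      intro k
      induction k with
      | zero =>
        intro x hx
        have hx' : x = 0 := (Submodule.mem_bot ℂ).1 hx
        simp [hx']
      | succ k ih =>
        intro x hx
        rw [hg_succ k] at hx
        rcases Submodule.mem_sup.1 hx with ⟨y, hy, u, hu, rfl⟩
        have horthy : y ∈ (nxt (g k))ᗮ := orth_symm (hnxt_le (g k)) hy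
        have horthu : ∀ i, i < k → u ∈ (nxt (g i))ᗮ := by
          intro i hi
          have : nxt (g k) ≤ (nxt (g i))ᗮ := by
            calc nxt (g k) ≤ (g k)ᗮ := hnxt_le (g k)
              _ ≤ (g (i+1))ᗮ := Submodule.orthogonal_le (hg_mono hi)
              _ ≤ (nxt (g i))ᗮ := Submodule.orthogonal_le ((hg_succ i) ▸ le_sup_right)
          exact this hu
        rw [Finset.sum_range_succ]
        simp only [ContinuousLinearMap.add_apply, ContinuousLinearMap.sum_apply] at ih ⊢
        have hterm : ∀ i ∈ Finset.range k, pj' (nxt (g i)) (y + u)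
            = pj' (nxt (g i)) y := by
          intro i hi
          rw [map_add, pj'_apply_of_mem_orth (hUc i) (horthu i (Finset.mem_range.1 hi)),
            add_zero]
        rw [Finset.sum_congr rfl hterm, ih y hy, map_add,
          pj'_apply_of_mem_orth (hUc k) horthy, pj'_apply_of_mem (hUc k) hu, zero_add]
    ext x
    have : x ∈ g n := htop ▸ Submodule.mem_top (R := ℂ)
    simpa using main n x this

/-- on an atom, the compressed commutant acts by scalars -/
lemma atom_scalar (hW : ∀ M : Submodule ℂ H, Inv S M → IsClosed (M : Set H))
    {U : Submodule ℂ H} (hU : Atom S U) {b : H →L[ℂ] H} (hb : b ∈ 𝔄) :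
    ∃ μ : ℂ, pj' U * b * pj' U = μ • pj' U := by
  obtain ⟨hUc, hUinv, hUne, hUmin⟩ := hU
  haveI : CompleteSpace U := hUc.completeSpace_coe
  haveI : Nontrivial U := Submodule.nontrivial_iff_ne_bot.2 hUne
  set a : H →L[ℂ] H := pj' U with ha_def
  have ha_mem : a ∈ 𝔄 := pj'_mem_cent hUc hUinv
  set x : H →L[ℂ] H := a * b * a with hx_def
  have hx_mem : x ∈ 𝔄 := mul_mem (mul_mem ha_mem hb) ha_mem
  have hxU : ∀ z : H, x z ∈ U := fun z => pj'_mem_range hUc _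
  have hxa : x * a = x := by
    calc x * a = a * b * (a * a) := by rw [hx_def, mul_assoc (a*b) a a]
      _ = a * b * a := by rw [ha_def, pj'_idem hUc]
      _ = x := hx_def.symm
  -- the restriction of x to U
  set xh : U →L[ℂ] U := (U.orthogonalProjectionOnto) ∘L (x ∘L U.subtypeL) with hxh_def
  have hxh_coe : ∀ u : U, (xh u : H) = x (u : H) := by
    intro u
    simp only [hxh_def, ContinuousLinearMap.comp_apply, Submodule.subtypeL_apply]
    exact Submodule.starProjection_eq_self_iff.2 (hxU (u : H))
  obtain ⟨μ, hμ⟩ := spectrum.nonempty xh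
  refine ⟨μ, ?_⟩
  set b' : H →L[ℂ] H := x - μ • a with hb'_def
  have hb'_mem : b' ∈ 𝔄 := sub_mem hx_mem (Subalgebra.smul_mem _ ha_mem μ)
  have hb'a : b' * a = b' := by
    rw [hb'_def, sub_mul, hxa, smul_mul_assoc, pj'_idem hUc]
  have hb'U : ∀ z : H, b' z ∈ U := by
    intro z
    simp only [hb'_def, ContinuousLinearMap.sub_apply, ContinuousLinearMap.smul_apply]
    exact sub_mem (hxU z) (Submodule.smul_mem _ _ (pj'_mem_range hUc z))
  -- enough to show b' vanishes on U
  have hgoal : (∀ u ∈ U, b' u = 0) → x = μ • a := by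
    intro h
    have : b' = 0 := by
      ext z
      have : b' (a z) = 0 := h _ (pj'_mem_range hUc z)
      calc b' z = (b' * a) z := by rw [hb'a]
        _ = 0 := this
      |>.trans rfl
    rw [hb'_def] at this
    have := sub_eq_zero.1 this
    exact this
  -- the range and the relevant part of the kernel of b'
  have hrange_le : b'.range ≤ U := by
    rintro z ⟨w, rfl⟩
    exact hb'U w
  have hrange_cases := hUmin b'.range hrange_le
    (hW _ (inv_range hb'_mem)) (inv_range hb'_mem)
  have hker_cases := hUmin (b'.ker ⊓ U) inf_le_right
    (by rw [Submodule.coe_inf]; exact (ContinuousLinearMap.isClosed_ker b').inter hUc)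
    (inv_inf (inv_ker hb'_mem) hUinv)
  rcases hker_cases with hK | hK
  · rcases hrange_cases with hR | hR
    · -- b' = 0 on everything
      refine hgoal (fun u hu => ?_)
      have : b' u ∈ b'.range := ⟨u, rfl⟩
      rw [hR] at this
      exact (Submodule.mem_bot ℂ).1 this
    · -- b' restricted to U is bijective: contradiction with μ ∈ spectrum
      exfalso
      have hf_coe : ∀ u : U, ((xh - μ • 1) u : H) = b' (u : H) := by
        intro u
        have hau : a (u : H) = (u : H) := pj'_apply_of_mem hUc u.2
        simp only [ContinuousLinearMap.sub_apply, ContinuousLinearMap.smul_apply,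
          ContinuousLinearMap.one_apply, Submodule.coe_sub, Submodule.coe_smul, hxh_coe,
          hb'_def, hau]
      have hinj : (xh - μ • 1).ker = ⊥ := by
        rw [LinearMap.ker_eq_bot']
        intro u hu
        have : b' (u : H) = 0 := by rw [ContinuousLinearMap.coe_coe] at hu; rw [← hf_coe u, hu]; rfl
        have : (u : H) ∈ b'.ker ⊓ U := ⟨this, u.2⟩
        rw [hK] at this
        exact Subtype.ext ((Submodule.mem_bot ℂ).1 this)
      have hsurj : (xh - μ • 1).range = ⊤ := by
        rw [LinearMap.range_eq_top]
        intro v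
        have hv : (v : H) ∈ b'.range := by rw [hR]; exact v.2
        obtain ⟨z, hz⟩ := hv
        refine ⟨⟨a z, pj'_mem_range hUc z⟩, ?_⟩
        apply Subtype.ext
        rw [ContinuousLinearMap.coe_coe, hf_coe]
        calc b' (a z) = (b' * a) z := rfl
          _ = b' z := by rw [hb'a]
          _ = (v : H) := hz
      obtain ⟨e, he⟩ : ∃ e : U ≃L[ℂ] U, (e : U →L[ℂ] U) = xh - μ • 1 :=
        ⟨ContinuousLinearEquiv.ofBijective (xh - μ • 1) hinj hsurj,
          ContinuousLinearEquiv.coe_ofBijective _ hinj hsurj⟩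
      have hunit_f : IsUnit (xh - μ • 1) := by
        rw [← he]
        exact ⟨⟨(e : U →L[ℂ] U), (e.symm : U →L[ℂ] U), by ext u; simp, by ext u; simp⟩, rfl⟩
      have : IsUnit (algebraMap ℂ (U →L[ℂ] U) μ - xh) := by
        have heq : algebraMap ℂ (U →L[ℂ] U) μ - xh = -(xh - μ • 1) := by
          rw [Algebra.algebraMap_eq_smul_one]
          abel
        rw [heq]
        exact hunit_f.neg
      exact (spectrum.mem_iff.1 hμ) this
  · -- b' kills U
    refine hgoal (fun u hu => ?_)
    have : u ∈ b'.ker ⊓ U := by rw [hK]; exact hu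
    exact this.1

/-- corners of the commutant between two atoms are at most one-dimensional -/
lemma corner_span (hW : ∀ M : Submodule ℂ H, Inv S M → IsClosed (M : Set H))
    {U V : Submodule ℂ H} (hU : Atom S U ∨ U = ⊥) (hV : Atom S V ∨ V = ⊥) :
    ∃ z : H →L[ℂ] H, ∀ b ∈ 𝔄, ∃ μ : ℂ, pj' U * b * pj' V = μ • z := by
  classical
  rcases hU with hU | hU
  swap
  · exact ⟨0, fun b _ => ⟨0, by rw [hU, pj'_bot]; simp⟩⟩
  rcases hV with hV | hV
  swap
  · exact ⟨0, fun b _ => ⟨0, by rw [hV, pj'_bot]; simp⟩⟩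
  by_cases hex : ∃ b₀ ∈ 𝔄, pj' U * b₀ * pj' V ≠ 0
  swap
  · push_neg at hex
    exact ⟨0, fun b hb => ⟨0, by rw [hex b hb]; simp⟩⟩
  obtain ⟨b₀, hb₀, hx0⟩ := hex
  set aU : H →L[ℂ] H := pj' U with haU
  set aV : H →L[ℂ] H := pj' V with haV
  have haU_mem : aU ∈ 𝔄 := pj'_mem_cent hU.1 hU.2.1
  have haV_mem : aV ∈ 𝔄 := pj'_mem_cent hV.1 hV.2.1
  have haUi : aU * aU = aU := by rw [haU]; exact pj'_idem hU.1
  have haVi : aV * aV = aV := by rw [haV]; exact pj'_idem hV.1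
  have haUs : star aU = aU := by rw [haU]; exact pj'_star hU.1
  have haVs : star aV = aV := by rw [haV]; exact pj'_star hV.1
  set x : H →L[ℂ] H := aU * b₀ * aV with hx
  have hstarx : star x = aV * star b₀ * aU := by
    rw [hx, star_mul, star_mul, haUs, haVs, mul_assoc]
  -- `star x * x` is a scalar multiple of `aV`
  have hmidV : star b₀ * aU * b₀ ∈ 𝔄 := mul_mem (mul_mem (star_mem_cent hb₀) haU_mem) hb₀
  obtain ⟨α, hα⟩ := atom_scalar hW hV hmidV
  have hα' : aV * (star b₀ * aU * b₀) * aV = α • aV := hα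
  have hsxx : star x * x = α • aV := by
    calc star x * x = aV * (star b₀ * (aU * (aU * (b₀ * aV)))) := by
          rw [hstarx, hx]; simp only [mul_assoc]
      _ = aV * (star b₀ * (aU * aU * (b₀ * aV))) := by rw [← mul_assoc aU aU (b₀ * aV)]
      _ = aV * (star b₀ * (aU * (b₀ * aV))) := by rw [haUi]
      _ = aV * (star b₀ * aU * b₀) * aV := by simp only [mul_assoc]
      _ = α • aV := hα'
  have hα0 : α ≠ 0 := by
    intro h0
    apply hx0
    have hz : star x * x = 0 := by rw [hsxx, h0, zero_smul]
    have hn : ‖x‖ * ‖x‖ = 0 := by rw [← CStarRing.norm_star_mul_self, hz, norm_zero]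
    have : ‖x‖ = 0 := by nlinarith [norm_nonneg x]
    exact norm_eq_zero.1 this
  refine ⟨x, fun b hb => ?_⟩
  set y : H →L[ℂ] H := aU * b * aV with hy
  have hmidU : b * aV * star b₀ ∈ 𝔄 := mul_mem (mul_mem hb haV_mem) (star_mem_cent hb₀)
  obtain ⟨γ, hγ⟩ := atom_scalar hW hU hmidU
  have hγ' : aU * (b * aV * star b₀) * aU = γ • aU := hγ
  have hys : y * star x = γ • aU := by
    calc y * star x = aU * (b * (aV * (aV * (star b₀ * aU)))) := by
          rw [hy, hstarx]; simp only [mul_assoc]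
      _ = aU * (b * (aV * aV * (star b₀ * aU))) := by rw [← mul_assoc aV aV (star b₀ * aU)]
      _ = aU * (b * (aV * (star b₀ * aU))) := by rw [haVi]
      _ = aU * (b * aV * star b₀) * aU := by simp only [mul_assoc]
      _ = γ • aU := hγ'
  have hyaV : y * aV = y := by
    calc y * aV = aU * (b * (aV * aV)) := by rw [hy]; simp only [mul_assoc]
      _ = aU * (b * aV) := by rw [haVi]
      _ = y := by rw [hy]; simp only [mul_assoc]
  have haUx : aU * x = x := by
    calc aU * x = aU * aU * (b₀ * aV) := by rw [hx]; simp only [mul_assoc]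
      _ = aU * (b₀ * aV) := by rw [haUi]
      _ = x := by rw [hx]; simp only [mul_assoc]
  have key : α • y = γ • x := by
    calc α • y = y * (α • aV) := by rw [mul_smul_comm, hyaV]
      _ = y * (star x * x) := by rw [hsxx]
      _ = y * star x * x := by rw [mul_assoc y (star x) x]
      _ = (γ • aU) * x := by rw [hys]
      _ = γ • (aU * x) := by rw [smul_mul_assoc]
      _ = γ • x := by rw [haUx]
  refine ⟨α⁻¹ * γ, ?_⟩
  calc aU * b * aV = y := hy.symm
    _ = α⁻¹ • (α • y) := by rw [smul_smul, inv_mul_cancel₀ hα0, one_smul]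
    _ = α⁻¹ • (γ • x) := by rw [key]
    _ = (α⁻¹ * γ) • x := by rw [smul_smul]

end Stmt5Aux

set_option synthInstance.maxHeartbeats 800000 in
set_option maxHeartbeats 1600000 in
/-- if a C*-algebra `S ⊆ B(H)` acts nondegenerately and its commutant is
infinite dimensional, then there is a non-closed `S`-invariant linear manifold in `H`. -/
theorem stmt5 {H : Type*} [NormedAddCommGroup H] [InnerProductSpace ℂ H] [CompleteSpace H]
    (S : StarSubalgebra ℂ (H →L[ℂ] H)) (hSclosed : IsClosed (S : Set (H →L[ℂ] H)))
    (hnondeg : ∀ x : H, (∀ T ∈ S, T x = 0) → x = 0)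
    (hinf : ¬ FiniteDimensional ℂ (Subalgebra.centralizer ℂ (S : Set (H →L[ℂ] H)))) :
    ∃ M : Submodule ℂ H, (∀ T ∈ S, ∀ x ∈ M, T x ∈ M) ∧ ¬ IsClosed (M : Set H) := by
  classical
  by_contra hcon
  push_neg at hcon
  have hW : ∀ M : Submodule ℂ H, Stmt5Aux.Inv S M → IsClosed (M : Set H) :=
    fun M hM => hcon M hM
  apply hinf
  obtain ⟨n, U, hatom, horth, hsum⟩ := Stmt5Aux.decomp hW
  choose z hz using fun (i j : Fin n) =>
    Stmt5Aux.corner_span hW (hatom (i : ℕ)) (hatom (j : ℕ))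
  set A := Subalgebra.centralizer ℂ (S : Set (H →L[ℂ] H)) with hA
  let ψ : Fin n × Fin n → (↥A →ₗ[ℂ] (H →L[ℂ] H)) := fun p =>
    ((LinearMap.mulLeft ℂ (Stmt5Aux.pj' (U (p.1 : ℕ)))).comp
      (LinearMap.mulRight ℂ (Stmt5Aux.pj' (U (p.2 : ℕ))))).comp (Subalgebra.val A).toLinearMap
  have hψ : ∀ p (T : ↥A), ψ p T
      = Stmt5Aux.pj' (U (p.1 : ℕ)) * (T : H →L[ℂ] H) * Stmt5Aux.pj' (U (p.2 : ℕ)) := by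
    intro p T
    simp only [ψ, LinearMap.comp_apply, LinearMap.mulLeft_apply, LinearMap.mulRight_apply,
      AlgHom.toLinearMap_apply, Subalgebra.coe_val]
    rw [mul_assoc]
  have hmem : ∀ p (T : ↥A), ψ p T ∈ (ℂ ∙ (z p.1 p.2)) := by
    intro p T
    obtain ⟨μ, hμ⟩ := hz p.1 p.2 (T : H →L[ℂ] H) T.2
    rw [Submodule.mem_span_singleton]
    exact ⟨μ, by rw [hψ p T, hμ]⟩
  let Φ : ↥A →ₗ[ℂ] (∀ p : Fin n × Fin n, ↥(ℂ ∙ (z p.1 p.2))) :=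
    LinearMap.pi (fun p => (ψ p).codRestrict (ℂ ∙ (z p.1 p.2)) (hmem p))
  have hinj : Function.Injective Φ := by
    intro T₁ T₂ hT
    have hzero : ∀ p : Fin n × Fin n,
        Stmt5Aux.pj' (U (p.1 : ℕ)) * ((T₁ : H →L[ℂ] H) - (T₂ : H →L[ℂ] H))
          * Stmt5Aux.pj' (U (p.2 : ℕ)) = 0 := by
      intro p
      have := congrFun hT p
      have h2 : ψ p T₁ = ψ p T₂ := congrArg Subtype.val this
      rw [hψ p T₁, hψ p T₂] at h2
      rw [mul_sub, sub_mul, h2, sub_self]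
    have hd : (T₁ : H →L[ℂ] H) - (T₂ : H →L[ℂ] H) = 0 := by
      set D := (T₁ : H →L[ℂ] H) - (T₂ : H →L[ℂ] H) with hD
      calc D = (∑ i ∈ Finset.range n, Stmt5Aux.pj' (U i)) * D
              * (∑ j ∈ Finset.range n, Stmt5Aux.pj' (U j)) := by rw [hsum, one_mul, mul_one]
        _ = ∑ i ∈ Finset.range n, ∑ j ∈ Finset.range n,
              Stmt5Aux.pj' (U i) * D * Stmt5Aux.pj' (U j) := by
            rw [Finset.sum_mul, Finset.sum_mul]
            refine Finset.sum_congr rfl (fun i _ => ?_)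
            rw [Finset.mul_sum]
        _ = 0 := by
            refine Finset.sum_eq_zero (fun i hi => Finset.sum_eq_zero (fun j hj => ?_))
            have hi' := Finset.mem_range.1 hi
            have hj' := Finset.mem_range.1 hj
            exact hzero (⟨i, hi'⟩, ⟨j, hj'⟩)
    exact Subtype.ext (sub_eq_zero.1 hd)
  exact FiniteDimensional.of_injective Φ hinj
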